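/- With the same hypotheses, if wδ + kλ_j is not singular, then its index of regularity (the number of positive roots α with (wδ + kλ_j, α) < 0) equals the cardinality of {α ∈ Φ⁺ \ Φ_c : c·k < −(δ, w⁻¹α)}. -/
import Mathlib


open scoped RealInnerProductSpace

/-- With the same hypotheses as the singularity criterion, if `w δ + k λ j` is not
singular, then its index of regularity (the number of positive roots `α` with
`(w δ + k λ j, α) < 0`) equals the cardinality of
`{α ∈ pos \ Φc : c·k < −(δ, w⁻¹ α)}`. -/
theorem index_of_regularity {E : Type*} [NormedAddCommGroup E] [InnerProductSpace ℝ E]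
    (pos Φc : Set E) (hsub : Φc ⊆ pos) (hfin : pos.Finite)
    (δ : E) (hδpos : ∀ β ∈ pos, 0 < ⟪δ, β⟫)
    (c : ℝ) (hc : 0 < c) (lamj : E)
    (hlam_nc : ∀ α ∈ pos \ Φc, ⟪lamj, α⟫ = c)
    (hlam_c : ∀ α ∈ Φc, ⟪lamj, α⟫ = 0)
    (w : E ≃ₗᵢ[ℝ] E) (hw : ∀ α ∈ Φc, w.symm α ∈ pos) (k : ℤ)
    (hns : ¬ ∃ α ∈ pos, ⟪w δ + (k : ℝ) • lamj, α⟫ = 0) :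
    {α ∈ pos | ⟪w δ + (k : ℝ) • lamj, α⟫ < 0}.ncard =
      {α ∈ pos \ Φc | c * (k : ℝ) < -⟪δ, w.symm α⟫}.ncard := by
  congr 1
  ext α
  have hkey : ∀ β : E, ⟪w δ, β⟫ = ⟪δ, w.symm β⟫ := by
    intro β
    conv_lhs => rw [show β = w (w.symm β) from (w.apply_symm_apply β).symm]
    exact w.inner_map_map δ (w.symm β)
  simp only [Set.mem_setOf_eq, Set.mem_diff]
  constructor
  · rintro ⟨hα, hlt⟩
    have hnc : α ∉ Φc := by
      intro hαc
      have h1 : ⟪lamj, α⟫ = 0 := hlam_c α hαc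
      have h2 : 0 < ⟪δ, w.symm α⟫ := hδpos _ (hw α hαc)
      rw [inner_add_left, real_inner_smul_left, h1, hkey] at hlt
      linarith
    have h1 : ⟪lamj, α⟫ = c := hlam_nc α ⟨hα, hnc⟩
    rw [inner_add_left, real_inner_smul_left, h1, hkey] at hlt
    exact ⟨⟨hα, hnc⟩, by linarith⟩
  · rintro ⟨⟨hα, hnc⟩, hlt⟩
    have h1 : ⟪lamj, α⟫ = c := hlam_nc α ⟨hα, hnc⟩
    refine ⟨hα, ?_⟩
    rw [inner_add_left, real_inner_smul_left, h1, hkey]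
    linarith
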